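/- Let D ⊂ ℝ^d be nonempty, convex and compact with nonnegative coordinates, and let α ∈ ℝ^d with nonnegative coordinates and at least one strictly positive coordinate. Then inf over x ∈ [0,1]^d of max over y ∈ D of (y·x)/(α·x) equals max over y ∈ D of min over i with α_i > 0 of y_i/α_i, with the convention that ratios with zero denominator equal +∞. -/

import Mathlib

set_option maxHeartbeats 1000000


open scoped ENNReal

/-- Ratio with the convention `a / 0 = +∞`. -/
noncomputable def erat (a b : ℝ) : ℝ≥0∞ :=
  if b = 0 then ⊤ else ENNReal.ofReal (a / b)

/-- Minimax identity: for a nonempty convex compact set `D ⊆ ℝ^d_{≥0}` and a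
nonnegative vector `α` with some positive coordinate,
`inf_{x ∈ [0,1]^d} max_{y ∈ D} (y·x)/(α·x) = max_{y ∈ D} min_{i : α_i > 0} y_i/α_i`,
with the convention that ratios with zero denominator are `+∞`. -/
theorem minimax_ratio (d : ℕ) (D : Set (Fin d → ℝ))
    (hne : D.Nonempty) (hconv : Convex ℝ D) (hcomp : IsCompact D)
    (hDnn : ∀ y ∈ D, ∀ i, 0 ≤ y i)
    (α : Fin d → ℝ) (hα : ∀ i, 0 ≤ α i) (hα0 : ∃ i, 0 < α i) :
    (⨅ x ∈ {x : Fin d → ℝ | ∀ i, x i ∈ Set.Icc (0 : ℝ) 1},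
        ⨆ y ∈ D, erat (∑ i, y i * x i) (∑ i, α i * x i))
      = ⨆ y ∈ D, ⨅ i ∈ {i : Fin d | 0 < α i}, erat (y i) (α i) := by
  classical
  obtain ⟨i₀, hi₀⟩ := hα0
  set S : Finset (Fin d) := Finset.univ.filter (fun i => 0 < α i) with hSdef
  have hSmem : ∀ i, i ∈ S ↔ 0 < α i := by
    intro i; simp [hSdef]
  have hSne : S.Nonempty := ⟨i₀, (hSmem i₀).2 hi₀⟩
  set f : (Fin d → ℝ) → ℝ := fun y => S.inf' hSne (fun i => y i / α i) with hfdef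
  have hfc : Continuous f :=
    Continuous.finset_inf'_apply (f := fun (i : Fin d) (y : Fin d → ℝ) => y i / α i) hSne
      (fun i _ => (continuous_apply i).div_const _)
  obtain ⟨y₀, hy₀D, hy₀max⟩ := hcomp.exists_isMaxOn hne hfc.continuousOn
  set M : ℝ := f y₀ with hMdef
  have hfy_le : ∀ y ∈ D, f y ≤ M := fun y hy => hy₀max hy
  have hM0 : 0 ≤ M := by
    obtain ⟨i, hiS, hieq⟩ := Finset.exists_mem_eq_inf' hSne (fun i => y₀ i / α i)
    rw [hMdef, hfdef]
    simp only at hieq ⊢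
    rw [hieq]
    exact div_nonneg (hDnn y₀ hy₀D i) (hα i)
  -- inner infimum equals ofReal of the real min
  have hinner : ∀ y : Fin d → ℝ,
      (⨅ i ∈ {i : Fin d | 0 < α i}, erat (y i) (α i)) = ENNReal.ofReal (f y) := by
    intro y
    apply le_antisymm
    · obtain ⟨i, hiS, hieq⟩ := Finset.exists_mem_eq_inf' hSne (fun i => y i / α i)
      have hαi : 0 < α i := (hSmem i).1 hiS
      have : erat (y i) (α i) = ENNReal.ofReal (y i / α i) := by
        rw [erat, if_neg hαi.ne']
      calc (⨅ i ∈ {i : Fin d | 0 < α i}, erat (y i) (α i))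
          ≤ erat (y i) (α i) := biInf_le _ hαi
        _ = ENNReal.ofReal (f y) := by rw [this, hfdef]; simp only; rw [hieq]
    · apply le_iInf₂
      intro i hi
      have hαi : 0 < α i := hi
      rw [erat, if_neg hαi.ne']
      exact ENNReal.ofReal_le_ofReal (Finset.inf'_le _ ((hSmem i).2 hαi))
  have hRHS : (⨆ y ∈ D, ⨅ i ∈ {i : Fin d | 0 < α i}, erat (y i) (α i))
      = ENNReal.ofReal M := by
    apply le_antisymm
    · apply iSup₂_le
      intro y hy
      rw [hinner y]
      exact ENNReal.ofReal_le_ofReal (hfy_le y hy)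
    · calc ENNReal.ofReal M = ⨅ i ∈ {i : Fin d | 0 < α i}, erat (y₀ i) (α i) :=
            (hinner y₀).symm
        _ ≤ _ := le_iSup₂ (f := fun (y : Fin d → ℝ) (_ : y ∈ D) =>
            ⨅ i ∈ {i : Fin d | 0 < α i}, erat (y i) (α i)) y₀ hy₀D
  rw [hRHS]
  apply le_antisymm
  · -- hard direction: inf ≤ ofReal M, via separation for each ε > 0
    have key : ∀ ε : ℝ, 0 < ε →
        (⨅ x ∈ {x : Fin d → ℝ | ∀ i, x i ∈ Set.Icc (0 : ℝ) 1},
          ⨆ y ∈ D, erat (∑ i, y i * x i) (∑ i, α i * x i)) ≤ ENNReal.ofReal (M + ε) := by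
      intro ε hε
      -- separating hyperplane between D and K
      set K : Set (Fin d → ℝ) := {z | ∀ i, 0 < α i → (M + ε) * α i ≤ z i} with hKdef
      have hKconv : Convex ℝ K := by
        intro z1 h1 z2 h2 a b ha hb hab
        intro i hi
        have e : (a • z1 + b • z2) i = a * z1 i + b * z2 i := by simp
        rw [e]
        have key : a * ((M + ε) * α i) + b * ((M + ε) * α i) = (M + ε) * α i := by
          rw [← add_mul, hab, one_mul]
        linarith [mul_le_mul_of_nonneg_left (h1 i hi) ha,
          mul_le_mul_of_nonneg_left (h2 i hi) hb]
      have hKclosed : IsClosed K := by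
        have : K = ⋂ i, {z : Fin d → ℝ | 0 < α i → (M + ε) * α i ≤ z i} := by
          ext z; simp [hKdef]
        rw [this]
        apply isClosed_iInter
        intro i
        by_cases hi : 0 < α i
        · have : {z : Fin d → ℝ | 0 < α i → (M + ε) * α i ≤ z i}
              = (fun z : Fin d → ℝ => z i) ⁻¹' Set.Ici ((M + ε) * α i) := by
            ext z; simp [hi]
          rw [this]
          exact (isClosed_Ici).preimage (continuous_apply i)
        · have : {z : Fin d → ℝ | 0 < α i → (M + ε) * α i ≤ z i} = Set.univ := by
            ext z; simp [hi]
          rw [this]; exact isClosed_univ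
      have hdisj : Disjoint D K := by
        rw [Set.disjoint_left]
        intro y hyD hyK
        obtain ⟨i, hiS, hieq⟩ := Finset.exists_mem_eq_inf' hSne (fun i => y i / α i)
        have hαi : 0 < α i := (hSmem i).1 hiS
        have h1 : y i / α i ≤ M := by
          have := hfy_le y hyD
          rw [hfdef] at this; simp only at this hieq
          rw [← hieq]; exact this
        have h2 : y i ≤ M * α i := by
          rwa [div_le_iff₀ hαi] at h1
        have h3 : (M + ε) * α i ≤ y i := hyK i hαi
        nlinarith
      obtain ⟨g, u, v, hgD, huv, hgK⟩ :=
        geometric_hahn_banach_compact_closed hconv hcomp hKconv hKclosed hdisj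
      set c : Fin d → ℝ := fun i => g (Pi.single i (1:ℝ)) with hcdef
      have hrepr : ∀ z : Fin d → ℝ, g z = ∑ i, z i * c i := by
        intro z
        have hz : z = ∑ i, z i • (Pi.single i 1 : Fin d → ℝ) := by
          funext j
          simp [Finset.sum_apply, Pi.single_apply, mul_comm]
        conv_lhs => rw [hz]
        rw [map_sum]
        congr 1; funext i
        rw [map_smul]; rfl
      set z₀ : Fin d → ℝ := fun i => (M + ε) * α i with hz₀def
      have hz₀K : z₀ ∈ K := fun i _ => le_refl _
      -- c i ≥ 0 for all i; c j = 0 when α j = 0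
      have hshift : ∀ (i : Fin d) (t : ℝ), (0 < α i → 0 ≤ t) → z₀ + t • (Pi.single i 1 : Fin d → ℝ) ∈ K := by
        intro i t ht j hj
        have e : (z₀ + t • (Pi.single i 1 : Fin d → ℝ)) j
            = z₀ j + t * (Pi.single i 1 : Fin d → ℝ) j := by simp
        have hz : z₀ j = (M + ε) * α j := rfl
        show (M + ε) * α j ≤ (z₀ + t • (Pi.single i 1 : Fin d → ℝ)) j
        rw [e, hz]
        by_cases hji : j = i
        · subst hji
          have h0 : 0 ≤ t := ht hj
          rw [Pi.single_eq_same]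
          nlinarith
        · rw [Pi.single_eq_of_ne hji]
          simp
      have hcnn : ∀ i, 0 ≤ c i := by
        intro i
        by_contra hneg
        push_neg at hneg
        set t : ℝ := (g z₀ - v) / (-(c i)) with htdef
        have hgz₀ : v < g z₀ := hgK z₀ hz₀K
        have ht : 0 < t := div_pos (by linarith) (by linarith)
        have hmem : z₀ + t • (Pi.single i 1 : Fin d → ℝ) ∈ K := hshift i t (fun _ => ht.le)
        have hcne : c i ≠ 0 := ne_of_lt hneg
        have := hgK _ hmem
        rw [map_add, map_smul] at this
        simp only [smul_eq_mul] at this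
        have hci : g (Pi.single i (1:ℝ)) = c i := rfl
        rw [hci] at this
        have heq : t * c i = -(g z₀ - v) := by
          rw [htdef]
          field_simp
        nlinarith [this]
      have hczero : ∀ i, α i = 0 → c i = 0 := by
        intro i hαi
        by_contra hne0
        have hpos : 0 < c i := lt_of_le_of_ne (hcnn i) (Ne.symm hne0)
        set t : ℝ := (v - g z₀ - 1) / c i with htdef
        have hmem : z₀ + t • (Pi.single i 1 : Fin d → ℝ) ∈ K :=
          hshift i t (fun h => absurd hαi h.ne')
        have hgz₀ : v < g z₀ := hgK z₀ hz₀K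
        have hcne : c i ≠ 0 := hne0
        have := hgK _ hmem
        rw [map_add, map_smul] at this
        simp only [smul_eq_mul] at this
        have hci : g (Pi.single i (1:ℝ)) = c i := rfl
        rw [hci] at this
        have heq : t * c i = v - g z₀ - 1 := by
          rw [htdef]; field_simp
        nlinarith [this]
      -- some c is positive
      have hcex : ∃ i, 0 < c i := by
        by_contra hall
        push_neg at hall
        have hc0 : ∀ i, c i = 0 := fun i => le_antisymm (hall i) (hcnn i)
        obtain ⟨y, hy⟩ := hne
        have h1 : g y = 0 := by rw [hrepr]; simp [hc0]
        have h2 : g z₀ = 0 := by rw [hrepr]; simp [hc0]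
        have := hgD y hy
        have := hgK z₀ hz₀K
        linarith
      obtain ⟨i₁, hi₁⟩ := hcex
      have hαi₁ : 0 < α i₁ := by
        rcases lt_or_eq_of_le (hα i₁) with h | h
        · exact h
        · exact absurd (hczero i₁ h.symm) hi₁.ne'
      set m : ℝ := Finset.univ.sup' ⟨i₁, Finset.mem_univ i₁⟩ c with hmdef
      have hmpos : 0 < m := lt_of_lt_of_le hi₁ (Finset.le_sup' c (Finset.mem_univ i₁))
      set x : Fin d → ℝ := fun i => c i / m with hxdef
      have hxbox : x ∈ {x : Fin d → ℝ | ∀ i, x i ∈ Set.Icc (0 : ℝ) 1} := by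
        intro i
        constructor
        · exact div_nonneg (hcnn i) hmpos.le
        · rw [div_le_one hmpos]
          exact Finset.le_sup' c (Finset.mem_univ i)
      -- α·x > 0
      have hax : 0 < ∑ i, α i * x i := by
        have : ∑ i, α i * x i = (∑ i, α i * c i) / m := by
          rw [Finset.sum_div]; congr 1; funext i; rw [hxdef]; ring
        rw [this]
        apply div_pos _ hmpos
        have hterm : ∀ i ∈ Finset.univ, 0 ≤ α i * c i :=
          fun i _ => mul_nonneg (hα i) (hcnn i)
        have : α i₁ * c i₁ ≤ ∑ i, α i * c i :=
          Finset.single_le_sum hterm (Finset.mem_univ i₁)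
        nlinarith
      -- y·x ≤ (M+ε)(α·x) for y ∈ D
      have hbound : ∀ y ∈ D, ∑ i, y i * x i ≤ (M + ε) * ∑ i, α i * x i := by
        intro y hy
        have h1 : g y < u := hgD y hy
        have h2 : v < g z₀ := hgK z₀ hz₀K
        have h3 : (∑ i, y i * c i) < (M + ε) * ∑ i, α i * c i := by
          have e1 : g y = ∑ i, y i * c i := hrepr y
          have e2 : g z₀ = ∑ i, z₀ i * c i := hrepr z₀
          have e3 : ∑ i, z₀ i * c i = (M + ε) * ∑ i, α i * c i := by
            rw [Finset.mul_sum]; congr 1; funext i; rw [hz₀def]; ring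
          rw [e1] at h1; rw [e2, e3] at h2
          linarith
        have e4 : ∑ i, y i * x i = (∑ i, y i * c i) / m := by
          rw [Finset.sum_div]; congr 1; funext i; rw [hxdef]; ring
        have e5 : ∑ i, α i * x i = (∑ i, α i * c i) / m := by
          rw [Finset.sum_div]; congr 1; funext i; rw [hxdef]; ring
        rw [e4, e5]
        rw [div_le_iff₀ hmpos]
        have : (M + ε) * ((∑ i, α i * c i) / m) * m = (M + ε) * ∑ i, α i * c i := by
          field_simp
        rw [this]
        exact h3.le
      -- conclude
      calc (⨅ x ∈ {x : Fin d → ℝ | ∀ i, x i ∈ Set.Icc (0 : ℝ) 1},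
              ⨆ y ∈ D, erat (∑ i, y i * x i) (∑ i, α i * x i))
          ≤ ⨆ y ∈ D, erat (∑ i, y i * x i) (∑ i, α i * x i) := biInf_le _ hxbox
        _ ≤ ENNReal.ofReal (M + ε) := by
            apply iSup₂_le
            intro y hy
            rw [erat, if_neg hax.ne']
            apply ENNReal.ofReal_le_ofReal
            rw [div_le_iff₀ hax]
            exact hbound y hy
    -- pass ε → 0
    apply ENNReal.le_of_forall_pos_le_add
    intro ε hε _
    calc _ ≤ ENNReal.ofReal (M + ε) := key ε (by exact_mod_cast hε)
      _ ≤ ENNReal.ofReal M + ε := by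
          rw [ENNReal.ofReal_add hM0 ε.coe_nonneg, ENNReal.ofReal_coe_nnreal]
  · -- easy direction
    apply le_iInf₂
    intro x hx
    have hx0 : ∀ i, 0 ≤ x i := fun i => (hx i).1
    calc ENNReal.ofReal M
        ≤ erat (∑ i, y₀ i * x i) (∑ i, α i * x i) := by
          by_cases hax : (∑ i, α i * x i) = 0
          · rw [erat, if_pos hax]; exact le_top
          · have haxpos : 0 < ∑ i, α i * x i := by
              rcases (Finset.sum_nonneg fun i _ =>
                mul_nonneg (hα i) (hx0 i)).lt_or_eq with h | h
              · exact h
              · exact absurd h.symm hax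
            rw [erat, if_neg hax]
            apply ENNReal.ofReal_le_ofReal
            rw [le_div_iff₀ haxpos]
            calc M * ∑ i, α i * x i = ∑ i, M * (α i * x i) := by rw [Finset.mul_sum]
              _ ≤ ∑ i, y₀ i * x i := by
                  apply Finset.sum_le_sum
                  intro i _
                  by_cases hαi : 0 < α i
                  · have : M ≤ y₀ i / α i := Finset.inf'_le _ ((hSmem i).2 hαi)
                    have hMα : M * α i ≤ y₀ i := by
                      rwa [le_div_iff₀ hαi] at this
                    calc M * (α i * x i) = (M * α i) * x i := by ring
                      _ ≤ y₀ i * x i := by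
                          exact mul_le_mul_of_nonneg_right hMα (hx0 i)
                  · have hz : α i = 0 := le_antisymm (not_lt.mp hαi) (hα i)
                    rw [hz]
                    simpa using mul_nonneg (hDnn y₀ hy₀D i) (hx0 i)
      _ ≤ ⨆ y ∈ D, erat (∑ i, y i * x i) (∑ i, α i * x i) :=
          le_iSup₂ (f := fun (y : Fin d → ℝ) (_ : y ∈ D) =>
            erat (∑ i, y i * x i) (∑ i, α i * x i)) y₀ hy₀D
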